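/- Let a college admission market be given, and construct the extended marriage market in which each college c is replaced by q_c copies c_1, …, c_{q_c}, each copy c_i ranks students by the same strict order as c (with c_i in place of c), and each student's weak preference order ranks all copies c_1, …, c_{q_c} tied, at the position that c occupied in the student's original strict order. Then a valid matching μ on the college admission market is stable if and only if any matching on the extended marriage market obtained from μ by assigning the students in μ(c) bijectively to distinct copies of c (for every college c) is stable on the extended marriage market, where blocking on the extended market is defined via the strict parts of the (weak) preference orders. -/

import Mathlib

/-!
A college admission market (students `S`, colleges `C`, capacities `q c ≥ 1`,
strict total orders `prefS s` on `Option C` and `prefC c` on `Option S`,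
`none` standing for the person themself) and its extended marriage market:
each college `c` is replaced by `q c` copies, i.e. the women's side is
`Σ c : C, Fin (q c)`.  A copy `⟨c, i⟩` ranks students exactly as `c` does,
and a student ranks all copies of `c` tied, at the position `c` occupied in
their original strict order; both are modeled as total preorders whose
strict parts are induced by the original strict orders via the projection
`Option.map Sigma.fst`.

STATEMENT: a valid matching `μ` of the college admission market is stable
if and only if any matching `ν` of the extended marriage market obtained
from `μ` by assigning the students matched to `c` bijectively to distinct
copies of `c` is stable on the extended market (blocking defined via the
strict parts of the weak preference orders).
-/
theorem college_market_stable_iff_extended_market_stable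
    {S C : Type*} [Fintype S] [Fintype C] [DecidableEq S] [DecidableEq C]
    (q : C → ℕ) (hq : ∀ c, 1 ≤ q c)
    (prefS : S → Option C → Option C → Prop)
    (prefC : C → Option S → Option S → Prop)
    (hS : ∀ s, IsStrictTotalOrder (Option C) (prefS s))
    (hC : ∀ c, IsStrictTotalOrder (Option S) (prefC c))
    -- a valid matching μ of the college admission market
    (μ : Finset (S × C))
    (hvalS : ∀ s : S, (μ.filter fun p => p.1 = s).card ≤ 1)
    (hvalC : ∀ c : C, (μ.filter fun p => p.2 = c).card ≤ q c)
    -- a matching ν of the extended marriage market …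
    (νS : S → Option (Σ c : C, Fin (q c)))
    (νC : (Σ c : C, Fin (q c)) → Option S)
    (hν : ∀ s w, νS s = some w ↔ νC w = some s)
    -- … obtained from μ by assigning the students in μ(c) bijectively to
    -- distinct copies of c (distinctness is automatic from `hν`)
    (hcompat : ∀ s c, (s, c) ∈ μ ↔ ∃ i : Fin (q c), νS s = some ⟨c, i⟩) :
    -- students' weak preferences on the extended market: all copies of a
    -- college are tied, at the position the college occupied originally
    (let proj : Option (Σ c : C, Fin (q c)) → Option C := Option.map Sigma.fst
     let geS : S → Option (Σ c : C, Fin (q c)) → Option (Σ c : C, Fin (q c)) → Prop :=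
       fun s a b => ¬ prefS s (proj b) (proj a)
     -- copies' weak preferences over students: same order as the college
     let geC : (Σ c : C, Fin (q c)) → Option S → Option S → Prop :=
       fun w a b => ¬ prefC w.1 b a
     -- μ is stable on the college admission market …
     (((∀ p ∈ μ, prefS p.1 (some p.2) none ∧ prefC p.2 (some p.1) none) ∧
        ¬ ∃ (s : S) (c : C), (s, c) ∉ μ ∧
            ((∃ c', (s, c') ∈ μ ∧ prefS s (some c) (some c')) ∨
              ((∀ c', (s, c') ∉ μ) ∧ prefS s (some c) none)) ∧
            ((∃ s', (s', c) ∈ μ ∧ prefC c (some s) (some s')) ∨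
              ((μ.filter fun p => p.2 = c).card < q c ∧ prefC c (some s) none)))
      ↔
      -- … iff ν is stable on the extended marriage market (with blocking
      -- defined via the strict parts of the weak preferences)
      ((∀ s, ¬ (geS s none (νS s) ∧ ¬ geS s (νS s) none)) ∧
       (∀ w, ¬ (geC w none (νC w) ∧ ¬ geC w (νC w) none)) ∧
       ¬ ∃ (s : S) (w : Σ c : C, Fin (q c)),
           (geS s (some w) (νS s) ∧ ¬ geS s (νS s) (some w)) ∧
           (geC w (some s) (νC w) ∧ ¬ geC w (νC w) (some s))))) := by

  intro proj geS geC
  have asS : ∀ s a b, prefS s a b → ¬ prefS s b a := fun s a b h h' =>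
    (hS s).irrefl a ((hS s).trans _ _ _ h h')
  have asC : ∀ c a b, prefC c a b → ¬ prefC c b a := fun c a b h h' =>
    (hC c).irrefl a ((hC c).trans _ _ _ h h')
  have triS : ∀ s (c : C), ¬ prefS s none (some c) → prefS s (some c) none := by
    intro s c h
    rcases (or_iff_not_imp_left.2 fun h1 => or_iff_not_imp_right.2 fun h2 => (hS s).trichotomous _ _ h1 h2 :
        prefS s (some c) none ∨ some c = none ∨ prefS s none (some c)) with h1 | h1 | h1
    · exact h1
    · exact absurd h1 (by simp)
    · exact absurd h1 h
  have triC : ∀ c (s : S), ¬ prefC c none (some s) → prefC c (some s) none := by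
    intro c s h
    rcases (or_iff_not_imp_left.2 fun h1 => or_iff_not_imp_right.2 fun h2 => (hC c).trichotomous _ _ h1 h2 :
        prefC c (some s) none ∨ some s = none ∨ prefC c none (some s)) with h1 | h1 | h1
    · exact h1
    · exact absurd h1 (by simp)
    · exact absurd h1 h
  have h2 : ∀ s (w : Σ c : C, Fin (q c)), νS s = some w → (s, w.1) ∈ μ := by
    rintro s ⟨c, i⟩ h
    exact (hcompat s c).2 ⟨i, h⟩
  have h1' : ∀ s, νS s = none → ∀ c', (s, c') ∉ μ := by
    intro s h c' hm
    rcases (hcompat s c').1 hm with ⟨i, hi⟩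
    rw [h] at hi
    cases hi
  have hcard : ∀ c : C, (μ.filter fun p => p.2 = c).card
      = (Finset.univ.filter fun i : Fin (q c) => (νC ⟨c, i⟩).isSome).card := by
    intro c
    refine (Finset.card_bij
      (fun i hi => (((νC ⟨c, i⟩).get (by simpa using hi)), c)) ?_ ?_ ?_).symm
    · intro i hi
      simp only [Finset.mem_filter, Finset.mem_univ, true_and] at hi
      refine Finset.mem_filter.2 ⟨?_, rfl⟩
      exact h2 _ ⟨c, i⟩ ((hν _ _).2 (Option.some_get hi).symm)
    · intro i hi i' hi' heq
      simp only [Finset.mem_filter, Finset.mem_univ, true_and] at hi hi'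
      have hg : νC ⟨c, i⟩ = some ((νC ⟨c, i⟩).get hi) := (Option.some_get hi).symm
      have hg' : νC ⟨c, i'⟩ = some ((νC ⟨c, i'⟩).get hi') := (Option.some_get hi').symm
      have heq1 : (νC ⟨c, i⟩).get hi = (νC ⟨c, i'⟩).get hi' := congrArg Prod.fst heq
      have e1 : νS ((νC ⟨c, i⟩).get hi) = some ⟨c, i⟩ := (hν _ _).2 hg
      have e2 : νS ((νC ⟨c, i⟩).get hi) = some ⟨c, i'⟩ := by
        rw [heq1]; exact (hν _ _).2 hg'
      have : (⟨c, i⟩ : Σ c : C, Fin (q c)) = ⟨c, i'⟩ := by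
        have := e1.symm.trans e2; exact Option.some_injective _ this
      simpa using this
    · intro p hp
      simp only [Finset.mem_filter] at hp
      obtain ⟨hpμ, hpc⟩ := hp
      rcases (hcompat p.1 c).1 (by rw [← hpc]; exact hpμ) with ⟨i, hi⟩
      have hvi : νC ⟨c, i⟩ = some p.1 := (hν _ _).1 hi
      refine ⟨i, by simp [hvi], ?_⟩
      have : (νC ⟨c, i⟩).get (by simp [hvi]) = p.1 := by simp [hvi]
      exact Prod.ext this hpc.symm
  have h3 : ∀ c : C, ((μ.filter fun p => p.2 = c).card < q c ↔
      ∃ i : Fin (q c), νC ⟨c, i⟩ = none) := by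
    intro c
    rw [hcard c]
    constructor
    · intro h
      by_contra hno
      push_neg at hno
      have : (Finset.univ.filter fun i : Fin (q c) => (νC ⟨c, i⟩).isSome)
          = Finset.univ := by
        apply Finset.eq_univ_of_forall
        intro i
        simp [Option.isSome_iff_ne_none, hno i]
      rw [this] at h
      simp at h
    · rintro ⟨i, hi⟩ 
      have hsub : (Finset.univ.filter fun i : Fin (q c) => (νC ⟨c, i⟩).isSome)
          ⊆ Finset.univ.erase i := by
        intro j hj
        simp only [Finset.mem_filter, Finset.mem_univ, true_and] at hj
        refine Finset.mem_erase.2 ⟨?_, Finset.mem_univ j⟩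
        rintro rfl
        rw [hi] at hj
        simp at hj
      calc (Finset.univ.filter fun i : Fin (q c) => (νC ⟨c, i⟩).isSome).card
          ≤ (Finset.univ.erase i).card := Finset.card_le_card hsub
        _ < Finset.univ.card := Finset.card_erase_lt_of_mem (Finset.mem_univ i)
        _ = q c := by simp
  simp only [geS, geC, proj, not_not, Option.map_some, Option.map_none]
  constructor
  · rintro ⟨hIR, hNB⟩
    refine ⟨?_, ?_, ?_⟩
    · rintro s ⟨-, hg2⟩
      -- hg2 : prefS s none (proj (νS s))
      cases hv : νS s with
      | none => rw [hv] at hg2; simp at hg2; exact (hS s).irrefl none hg2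
      | some w =>
        have hm := h2 s w hv
        have := (hIR _ hm).1
        rw [hv] at hg2
        simp at hg2
        exact asS s _ _ this hg2
    · rintro w ⟨-, hg2⟩
      cases hv : νC w with
      | none => rw [hv] at hg2; exact (hC w.1).irrefl none hg2
      | some s =>
        have hm := h2 s w ((hν s w).2 hv)
        have := (hIR _ hm).2
        rw [hv] at hg2
        exact asC w.1 _ _ this hg2
    · rintro ⟨s, w, ⟨-, hsw⟩, ⟨-, hcw⟩⟩
      -- hsw : prefS s (some w.1) (proj (νS s)), hcw : prefC w.1 (some s) (νC w)
      apply hNB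
      refine ⟨s, w.1, ?_, ?_, ?_⟩
      · intro hm
        rcases (hcompat s w.1).1 hm with ⟨i, hi⟩
        rw [hi] at hsw
        simp at hsw
        exact (hS s).irrefl _ hsw
      · cases hv : νS s with
        | none =>
          right
          exact ⟨h1' s hv, by rw [hv] at hsw; simpa using hsw⟩
        | some w' =>
          left
          exact ⟨w'.1, h2 s w' hv, by rw [hv] at hsw; simpa using hsw⟩
      · cases hv : νC w with
        | none =>
          right
          obtain ⟨c, i⟩ := w
          exact ⟨(h3 c).2 ⟨i, hv⟩, by rw [hv] at hcw; exact hcw⟩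
        | some s' =>
          left
          exact ⟨s', h2 s' w ((hν s' w).2 hv), by rw [hv] at hcw; exact hcw⟩
  · rintro ⟨hA, hB, hC'⟩
    constructor
    · rintro ⟨s, c⟩ hm
      rcases (hcompat s c).1 hm with ⟨i, hi⟩
      constructor
      · apply triS
        intro hbad
        exact hA s ⟨asS s _ _ (by rw [hi]; simpa using hbad), by rw [hi]; simpa using hbad⟩
      · apply triC
        intro hbad
        have hv : νC ⟨c, i⟩ = some s := (hν _ _).1 hi
        exact hB ⟨c, i⟩ ⟨asC c _ _ (by rw [hv]; exact hbad), by rw [hv]; exact hbad⟩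
    · rintro ⟨s, c, hnm, hstud, hcoll⟩
      apply hC'
      have hsw : prefS s (some c) (Option.map Sigma.fst (νS s)) := by
        rcases hstud with ⟨c', hm', hp⟩ | ⟨hun, hp⟩
        · rcases (hcompat s c').1 hm' with ⟨i, hi⟩
          rw [hi]; simpa using hp
        · have hv : νS s = none := by
            cases hv : νS s with
            | none => rfl
            | some w => exact absurd (h2 s w hv) (hun w.1)
          rw [hv]; simpa using hp
      rcases hcoll with ⟨s', hm', hp⟩ | ⟨hlt, hp⟩
      · rcases (hcompat s' c).1 hm' with ⟨i, hi⟩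
        have hv : νC ⟨c, i⟩ = some s' := (hν _ _).1 hi
        exact ⟨s, ⟨c, i⟩, ⟨asS s _ _ hsw, hsw⟩, ⟨asC c _ _ (by rw [hv]; exact hp), by rw [hv]; exact hp⟩⟩
      · rcases (h3 c).1 hlt with ⟨i, hv⟩
        exact ⟨s, ⟨c, i⟩, ⟨asS s _ _ hsw, hsw⟩, ⟨asC c _ _ (by rw [hv]; exact hp), by rw [hv]; exact hp⟩⟩
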